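/- Let d ≥ 3 and n ≥ 1 an integer, and define σ_n^{il}(x) = x^i x^l/(|x|² + 1/n) on ℝ^d for i, l = 1,…,d. Then for every x ∈ ℝ^d and every l, Σ_i ∂_i σ_n^{il}(x) = ((d−1)|x|² + (d+1)/n) x^l / (|x|² + 1/n)², and consequently Σ_l ( Σ_i ∂_i σ_n^{il}(x) )² ≤ 4d² / (|x|² + 1/n). -/

import Mathlib

open MeasureTheory
open scoped BigOperators

/-- The partial derivative `∂_i f` on `ℝ^d`. -/
noncomputable def pd {d : ℕ} (i : Fin d) (f : EuclideanSpace ℝ (Fin d) → ℝ)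
    (x : EuclideanSpace ℝ (Fin d)) : ℝ :=
  fderiv ℝ f x (EuclideanSpace.single i 1)

/-- The matrix field `σ_n^{il}(x) = x^i x^l/(|x|² + 1/n)`. -/
noncomputable def sFld (d n : ℕ) (i l : Fin d) (x : EuclideanSpace ℝ (Fin d)) : ℝ :=
  x i * x l / (‖x‖ ^ 2 + 1 / (n : ℝ))

lemma normsq (d : ℕ) (x : EuclideanSpace ℝ (Fin d)) : ‖x‖ ^ 2 = ∑ j, x j * x j := by
  rw [PiLp.norm_sq_eq_of_L2]
  exact Finset.sum_congr rfl fun j _ => by rw [Real.norm_eq_abs, sq_abs, sq]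

lemma pd_sFld (d n : ℕ) (hn : 1 ≤ n) (i l : Fin d) (x : EuclideanSpace ℝ (Fin d)) :
    pd i (sFld d n i l) x =
      x i * x l * (-(((‖x‖^2 + 1/(n:ℝ))^2)⁻¹) * (2 * x i))
        + (‖x‖^2 + 1/(n:ℝ))⁻¹ * (x i * (if l = i then 1 else 0) + x l * (if i = i then 1 else 0)) := by
  have hc : (0:ℝ) < 1/(n:ℝ) := by positivity
  set c : ℝ := 1/(n:ℝ)
  set F : EuclideanSpace ℝ (Fin d) → ℝ := fun y => (∑ j, y j * y j) + c with hF
  have hFx : ∀ y, F y = ‖y‖^2 + c := fun y => by rw [hF, normsq]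
  have hFne : F x ≠ 0 := by rw [hFx]; positivity
  set P : Fin d → (EuclideanSpace ℝ (Fin d) →L[ℝ] ℝ) := fun j => EuclideanSpace.proj j with hP
  have hproj : ∀ (j : Fin d), HasFDerivAt (fun y : EuclideanSpace ℝ (Fin d) => (y j : ℝ))
      (P j) x := fun j =>
    (EuclideanSpace.proj j : EuclideanSpace ℝ (Fin d) →L[ℝ] ℝ).hasFDerivAt
  have hFder : HasFDerivAt F
      (∑ j, (x j • P j + x j • P j)) x := by
    exact (HasFDerivAt.fun_sum (fun j _ => (hproj j).mul (hproj j))).add_const c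
  have hN : HasFDerivAt (fun y : EuclideanSpace ℝ (Fin d) => y i * y l)
      (x i • P l + x l • P i) x := (hproj i).mul (hproj l)
  have hinv : HasDerivAt (fun y : ℝ => y⁻¹) (-((F x)^2)⁻¹) (F x) := hasDerivAt_inv hFne
  have hcomp : HasFDerivAt (fun y => (F y)⁻¹)
      ((-((F x)^2)⁻¹) • (∑ j, (x j • P j + x j • P j))) x :=
    hinv.comp_hasFDerivAt x hFder
  have htot := hN.fun_mul hcomp
  have heq : sFld d n i l = fun y => (fun y : EuclideanSpace ℝ (Fin d) => y i * y l) y * (F y)⁻¹ := by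
    funext y; rw [sFld, hFx, div_eq_mul_inv]
  rw [pd, heq, htot.fderiv]
  simp only [ContinuousLinearMap.add_apply, ContinuousLinearMap.coe_smul',
    Pi.smul_apply, ContinuousLinearMap.coe_sum', Finset.sum_apply,
    hP, PiLp.proj_apply, EuclideanSpace.single_apply, smul_eq_mul,
    hFx x, mul_ite, mul_one, mul_zero, Finset.sum_add_distrib,
    Finset.sum_ite_eq', Finset.mem_univ, if_true]
  ring


/-- For `d ≥ 3`, `n ≥ 1` and `σ_n^{il}(x) = x^i x^l/(|x|²+1/n)`:
`Σ_i ∂_i σ_n^{il}(x) = ((d−1)|x|² + (d+1)/n) x^l/(|x|²+1/n)²` and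
`Σ_l (Σ_i ∂_i σ_n^{il}(x))² ≤ 4d²/(|x|²+1/n)`. -/
theorem stmt14 (d n : ℕ) (hd : 3 ≤ d) (hn : 1 ≤ n) :
    ∀ x : EuclideanSpace ℝ (Fin d),
      (∀ l, ∑ i, pd i (sFld d n i l) x =
        (((d : ℝ) - 1) * ‖x‖ ^ 2 + ((d : ℝ) + 1) / (n : ℝ)) * x l /
          (‖x‖ ^ 2 + 1 / (n : ℝ)) ^ 2) ∧
      ∑ l, (∑ i, pd i (sFld d n i l) x) ^ 2 ≤
        4 * (d : ℝ) ^ 2 / (‖x‖ ^ 2 + 1 / (n : ℝ)) := by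
  intro x
  have hn' : (1:ℝ) ≤ (n:ℝ) := by exact_mod_cast hn
  have hc : (0:ℝ) < 1/(n:ℝ) := by positivity
  have hq : (0:ℝ) < ‖x‖^2 + 1/(n:ℝ) := by positivity
  set c : ℝ := 1/(n:ℝ) with hcdef
  set q : ℝ := ‖x‖^2 + c with hqdef
  have hd3 : (3:ℝ) ≤ (d:ℝ) := by exact_mod_cast hd
  have hsum : ∀ l, ∑ i, pd i (sFld d n i l) x =
      (((d : ℝ) - 1) * ‖x‖ ^ 2 + ((d : ℝ) + 1) * c) * x l / q ^ 2 := by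
    intro l
    rw [Finset.sum_congr rfl fun i _ => pd_sFld d n hn i l x]
    simp only [if_pos rfl, mul_one, mul_ite, mul_zero]
    rw [Finset.sum_add_distrib]
    rw [Finset.sum_congr rfl (fun i _ => by ring :
      ∀ i ∈ Finset.univ, x i * x l * (-(q^2)⁻¹ * (2 * x i))
        = (x l * (-(q^2)⁻¹) * 2) * (x i * x i)),
      ← Finset.mul_sum, ← normsq]
    simp only [← hcdef, if_true]
    rw [← Finset.mul_sum, Finset.sum_add_distrib, Finset.sum_ite_eq]
    simp only [Finset.mem_univ, if_true, Finset.sum_const, Finset.card_univ,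
      Fintype.card_fin, nsmul_eq_mul]
    field_simp
    ring
  refine ⟨fun l => by rw [hsum l, hcdef, mul_one_div], ?_⟩
  set A : ℝ := ((d : ℝ) - 1) * ‖x‖ ^ 2 + ((d : ℝ) + 1) * c with hA
  have hA0 : 0 ≤ A := by nlinarith [sq_nonneg ‖x‖, hc.le]
  have hAq : A ≤ ((d:ℝ) + 1) * q := by
    rw [hqdef]; nlinarith [sq_nonneg ‖x‖, hc.le]
  have hxq : ‖x‖^2 ≤ q := by rw [hqdef]; linarith
  have hsq : ∑ l, (∑ i, pd i (sFld d n i l) x) ^ 2 = (A / q^2)^2 * ‖x‖^2 := by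
    rw [Finset.sum_congr rfl fun l _ => by rw [hsum l]]
    rw [normsq, Finset.mul_sum]
    exact Finset.sum_congr rfl fun l _ => by ring
  rw [hsq, div_pow, div_mul_eq_mul_div, div_le_div_iff₀ (by positivity) hq]
  have h1 : A^2 ≤ ((d:ℝ)+1)^2 * q^2 := by nlinarith
  have h2 : ((d:ℝ)+1)^2 ≤ 4*(d:ℝ)^2 := by nlinarith
  have h3 : A^2 * ‖x‖^2 ≤ ((d:ℝ)+1)^2 * q^2 * q :=
    le_trans (mul_le_mul_of_nonneg_left hxq (sq_nonneg A))
      (mul_le_mul_of_nonneg_right h1 hq.le)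
  calc A^2 * ‖x‖^2 * q ≤ (((d:ℝ)+1)^2 * q^2 * q) * q :=
        mul_le_mul_of_nonneg_right h3 hq.le
    _ ≤ (4*(d:ℝ)^2 * q^2 * q) * q := by nlinarith [mul_le_mul_of_nonneg_right h2 (show (0:ℝ) ≤ q^2*q*q by positivity)]
    _ = 4*(d:ℝ)^2 * (q^2)^2 := by ring
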